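/- Let d, n, q be positive integers, let a_k ∈ ℝ^d for k ∈ [q] and b_{jk} ∈ ℝ for j ∈ [n], k ∈ [q]. Then the number of vectors ε ∈ {0,1}^{n×q} with P(ε) ≠ ∅ is at most Σ_{i=0}^{d} C(q, i) · n^i, where C(q, i) denotes the binomial coefficient. -/

import Mathlib

/-!
Counting the nonempty sign regions of an arrangement of `n·q` hyperplanes in
`ℝ^d` consisting of `q` families of `n` parallel hyperplanes each: the number
of `ε ∈ {0,1}^{n×q}` with `P(ε) ≠ ∅` is at most `∑_{i=0}^{d} C(q,i)·n^i`.

Here `ε j k : Bool` (with `false` playing the role of `0` and `true` the role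
of `1`), and `P(ε) = {z ∈ ℝ^d : a k · z ≤ b j k if ε j k = 0, a k · z > b j k
if ε j k = 1}`.
-/

open Finset


open Finset Module

attribute [local instance] Classical.propDecidable

lemma pattern_count {E : Type} [AddCommGroup E] [Module ℝ E] (n : ℕ) (Z : Set E)
    (f : E →ₗ[ℝ] ℝ) (c : Fin n → ℝ) :
    (Finset.univ.filter fun p : Fin n → Bool => ∃ z ∈ Z, ∀ j, p j = decide (c j < f z)).card
      ≤ 1 + (Finset.univ.filter fun j : Fin n =>
          ∃ z₁ ∈ Z, ∃ z₂ ∈ Z, f z₁ ≤ c j ∧ c j < f z₂).card := by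
  classical
  set C : Finset (Fin n) := Finset.univ.filter fun j : Fin n =>
      ∃ z₁ ∈ Z, ∃ z₂ ∈ Z, f z₁ ≤ c j ∧ c j < f z₂ with hC
  set T : Finset (Fin n → Bool) := Finset.univ.filter
      fun p : Fin n → Bool => ∃ z ∈ Z, ∀ j, p j = decide (c j < f z) with hT
  -- helper : ordered witnesses give equality
  have helper : ∀ z ∈ Z, ∀ z' ∈ Z, f z ≤ f z' →
      ∀ p p' : Fin n → Bool, (∀ j, p j = decide (c j < f z)) →
      (∀ j, p' j = decide (c j < f z')) →
      (C.filter fun j => p j = true).card = (C.filter fun j => p' j = true).card →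
      p = p' := by
    intro z hz z' hz' hle p p' hp hp' hcard
    have hsub : (C.filter fun j => p j = true) ⊆ (C.filter fun j => p' j = true) := by
      intro j hj
      rw [Finset.mem_filter] at hj ⊢
      refine ⟨hj.1, ?_⟩
      have hpj : c j < f z := by
        have := hj.2; rw [hp j] at this; exact of_decide_eq_true this
      rw [hp' j]; exact decide_eq_true (lt_of_lt_of_le hpj hle)
    have heq : (C.filter fun j => p j = true) = (C.filter fun j => p' j = true) :=
      Finset.eq_of_subset_of_card_le hsub (le_of_eq hcard.symm)
    funext j
    by_cases hjC : j ∈ C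
    · have h1 : (j ∈ C.filter fun j => p j = true) = (j ∈ C.filter fun j => p' j = true) := by
        rw [heq]
      simp only [Finset.mem_filter, hjC, true_and, eq_iff_iff] at h1
      cases hpj : p j <;> cases hp'j : p' j
      · rfl
      · exfalso; rw [hpj, hp'j] at h1; simp at h1
      · exfalso; rw [hpj, hp'j] at h1; simp at h1
      · rfl
    · cases hpj : p j <;> cases hp'j : p' j
      · rfl
      · -- p j = false, p' j = true : j crossed, contradiction
        exfalso
        apply hjC
        rw [hC, Finset.mem_filter]
        refine ⟨Finset.mem_univ _, z, hz, z', hz', ?_, ?_⟩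
        · have := hp j; rw [hpj] at this
          have : ¬ (c j < f z) := by
            intro h; rw [decide_eq_true h] at this; exact Bool.false_ne_true this
          exact le_of_not_gt this
        · have := hp' j; rw [hp'j] at this
          exact of_decide_eq_true this.symm
      · -- p j = true, p' j = false : c j < f z ≤ f z' ≤ c j
        exfalso
        have h1 : c j < f z := by
          have := hp j; rw [hpj] at this; exact of_decide_eq_true this.symm
        have h2 : ¬ (c j < f z') := by
          have := hp' j; rw [hp'j] at this
          intro h; rw [decide_eq_true h] at this; exact Bool.false_ne_true this
        exact h2 (lt_of_lt_of_le h1 hle)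
      · rfl
  have hmaps : ∀ p ∈ T, (C.filter fun j => p j = true).card ∈ Finset.range (C.card + 1) := by
    intro p _
    rw [Finset.mem_range]
    exact Nat.lt_succ_of_le (Finset.card_le_card (Finset.filter_subset _ _))
  have hinj : Set.InjOn (fun p : Fin n → Bool => (C.filter fun j => p j = true).card) T := by
    intro p hp p' hp' hcard
    rw [hT, Finset.mem_coe, Finset.mem_filter] at hp hp'
    obtain ⟨-, z, hz, hpz⟩ := hp
    obtain ⟨-, z', hz', hpz'⟩ := hp'
    rcases le_total (f z) (f z') with h | h
    · exact helper z hz z' hz' h p p' hpz hpz' hcard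
    · exact (helper z' hz' z hz h p' p hpz' hpz hcard.symm).symm
  calc T.card ≤ (Finset.range (C.card + 1)).card :=
        Finset.card_le_card_of_injOn _ hmaps hinj
    _ = 1 + C.card := by rw [Finset.card_range]; omega

lemma Zset_convex {E : Type} [AddCommGroup E] [Module ℝ E] {n q : ℕ} (K : Finset (Fin q))
    (a : Fin q → E →ₗ[ℝ] ℝ) (b : Fin n → Fin q → ℝ) (ε : Fin n → Fin q → Bool) :
    Convex ℝ {z : E | ∀ j, ∀ k ∈ K, ε j k = decide (b j k < a k z)} := by
  have hrw : {z : E | ∀ j, ∀ k ∈ K, ε j k = decide (b j k < a k z)}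
      = ⋂ j, ⋂ k ∈ K, {z : E | ε j k = decide (b j k < a k z)} := by
    ext z; simp [Set.mem_iInter]
  rw [hrw]
  refine convex_iInter fun j => convex_iInter fun k => convex_iInter fun hk => ?_
  cases hε : ε j k
  · have h2 : {z : E | false = decide (b j k < a k z)} = {z : E | a k z ≤ b j k} := by
      ext z; simp [eq_comm, not_lt]
    rw [h2]
    exact convex_halfSpace_le (a k).isLinear _
  · have h2 : {z : E | true = decide (b j k < a k z)} = {z : E | b j k < a k z} := by
      ext z; simp [eq_comm]
    rw [h2]
    exact convex_halfSpace_gt (a k).isLinear _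

lemma binom_step (m n d : ℕ) :
    ∑ i ∈ Finset.range (d + 1), m.choose i * n ^ i
      + n * ∑ i ∈ Finset.range d, m.choose i * n ^ i
    = ∑ i ∈ Finset.range (d + 1), (m + 1).choose i * n ^ i := by
  rw [Finset.sum_range_succ' (fun i => (m + 1).choose i * n ^ i),
      Finset.sum_range_succ' (fun i => m.choose i * n ^ i)]
  simp only [Nat.choose_succ_succ, add_mul, Finset.sum_add_distrib, Nat.choose_zero_right,
    pow_zero, mul_one, Finset.mul_sum, pow_succ, Nat.succ_eq_add_one]
  have h3 : ∀ x ∈ Finset.range d, n * (m.choose x * n ^ x) = m.choose x * (n ^ x * n) := by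
    intros; ring
  rw [Finset.sum_congr rfl h3]
  omega

def SPred (n q : ℕ) (K : Finset (Fin q)) (E : Type) [AddCommGroup E] [Module ℝ E]
    (a : Fin q → E →ₗ[ℝ] ℝ) (b : Fin n → Fin q → ℝ) (ε : Fin n → Fin q → Bool) : Prop :=
  (∀ j k, k ∉ K → ε j k = false) ∧ ∃ z : E, ∀ j, ∀ k ∈ K, ε j k = decide (b j k < a k z)

lemma core (n q : ℕ) (K : Finset (Fin q)) :
    ∀ (d : ℕ) (E : Type) [AddCommGroup E] [Module ℝ E] [FiniteDimensional ℝ E],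
      Module.finrank ℝ E ≤ d → ∀ (a : Fin q → E →ₗ[ℝ] ℝ) (b : Fin n → Fin q → ℝ),
      (Finset.univ.filter (SPred n q K E a b)).card
        ≤ ∑ i ∈ Finset.range (d + 1), K.card.choose i * n ^ i := by
  induction K using Finset.cons_induction with
  | empty =>
      intro d E _ _ _ hE a b
      calc (Finset.univ.filter (SPred n q ∅ E a b)).card
          ≤ ({fun _ _ => false} : Finset (Fin n → Fin q → Bool)).card := by
            apply Finset.card_le_card
            intro ε hε
            rw [Finset.mem_filter] at hε
            rw [Finset.mem_singleton]
            funext j k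
            exact hε.2.1 j k (Finset.notMem_empty k)
        _ = 1 := Finset.card_singleton _
        _ ≤ ∑ i ∈ Finset.range (d + 1), (∅ : Finset (Fin q)).card.choose i * n ^ i := by
            have h0 : (0 : ℕ) ∈ Finset.range (d + 1) := by simp
            have := Finset.single_le_sum
              (f := fun i => (∅ : Finset (Fin q)).card.choose i * n ^ i)
              (fun i _ => Nat.zero_le _) h0
            simpa using this
  | cons k K hk ih =>
      intro d E _ _ _ hE a b
      set S' := Finset.univ.filter (SPred n q (Finset.cons k K hk) E a b) with hS'
      set S := Finset.univ.filter (SPred n q K E a b) with hSdef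
      set Φ : (Fin n → Fin q → Bool) → (Fin n → Fin q → Bool) :=
        fun ε j k' => if k' = k then false else ε j k' with hΦ
      set Zs : (Fin n → Fin q → Bool) → Set E :=
        fun ε => {z : E | ∀ j, ∀ k' ∈ K, ε j k' = decide (b j k' < a k' z)} with hZs
      set cross : Fin n → (Fin n → Fin q → Bool) → Prop :=
        fun j ε' => ∃ z₁ ∈ Zs ε', ∃ z₂ ∈ Zs ε', a k z₁ ≤ b j k ∧ b j k < a k z₂ with hcross
      have hΦmem : ∀ ε ∈ S', Φ ε ∈ S := by
        intro ε hε
        rw [hS', Finset.mem_filter] at hε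
        obtain ⟨-, hzero, z, hz⟩ := hε
        rw [hSdef, Finset.mem_filter]
        refine ⟨Finset.mem_univ _, ?_, z, ?_⟩
        · intro j k' hk'
          by_cases h : k' = k
          · simp [hΦ, h]
          · have : k' ∉ Finset.cons k K hk := by
              rw [Finset.mem_cons]; rintro (rfl | hmem); exact h rfl; exact hk' hmem
            simp [hΦ, h, hzero j k' this]
        · intro j k' hk'
          have hne : k' ≠ k := fun h => hk (h ▸ hk')
          have := hz j k' (Finset.mem_cons.mpr (Or.inr hk'))
          simp [hΦ, hne, this]
      have hsum : S'.card = ∑ ε' ∈ S, (S'.filter fun ε => Φ ε = ε').card :=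
        Finset.card_eq_sum_card_fiberwise hΦmem
      have hfiber : ∀ ε' ∈ S, (S'.filter fun ε => Φ ε = ε').card ≤
          1 + (Finset.univ.filter fun j : Fin n => cross j ε').card := by
        intro ε' hε'
        have hstep : (S'.filter fun ε => Φ ε = ε').card ≤
            (Finset.univ.filter fun p : Fin n → Bool =>
              ∃ z ∈ Zs ε', ∀ j, p j = decide (b j k < a k z)).card := by
          apply Finset.card_le_card_of_injOn (fun ε (j : Fin n) => ε j k)
          · intro ε hε
            rw [Finset.mem_coe, Finset.mem_filter] at hε
            obtain ⟨hεS', hΦε⟩ := hε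
            rw [hS', Finset.mem_filter] at hεS'
            obtain ⟨-, hzero, z, hz⟩ := hεS'
            rw [Finset.mem_coe, Finset.mem_filter]
            refine ⟨Finset.mem_univ _, z, ?_, fun j => hz j k (Finset.mem_cons_self k K)⟩
            intro j k' hk'
            have hne : k' ≠ k := fun h => hk (h ▸ hk')
            have h1 : ε' j k' = ε j k' := by rw [← hΦε]; simp [hΦ, hne]
            rw [h1]
            exact hz j k' (Finset.mem_cons.mpr (Or.inr hk'))
          · intro ε₁ h₁ ε₂ h₂ hcol
            simp only [Finset.coe_filter, Set.mem_setOf_eq] at h₁ h₂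
            funext j k''
            by_cases h : k'' = k
            · subst h; exact congrFun hcol j
            · have e1 : Φ ε₁ j k'' = ε₁ j k'' := by simp [hΦ, h]
              have e2 : Φ ε₂ j k'' = ε₂ j k'' := by simp [hΦ, h]
              rw [← e1, ← e2, h₁.2, h₂.2]
        calc (S'.filter fun ε => Φ ε = ε').card
            ≤ _ := hstep
          _ ≤ 1 + (Finset.univ.filter fun j : Fin n => cross j ε').card :=
              pattern_count n (Zs ε') (a k) (fun j => b j k)
      have hswap : ∑ ε' ∈ S, (Finset.univ.filter fun j : Fin n => cross j ε').card
          = ∑ j : Fin n, (S.filter (cross j)).card := by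
        simp only [Finset.card_filter]
        exact Finset.sum_comm
      have hcrossbound : ∀ j : Fin n, (S.filter (cross j)).card
          ≤ ∑ i ∈ Finset.range d, K.card.choose i * n ^ i := by
        intro j
        rcases Finset.eq_empty_or_nonempty (S.filter (cross j)) with he | ⟨ε₀, hε₀⟩
        · rw [he]; simp
        · rw [Finset.mem_filter] at hε₀
          obtain ⟨hε₀S, z₁, hz₁, z₂, hz₂, hle, hlt⟩ := hε₀
          have hak : a k ≠ 0 := by
            intro h
            rw [h] at hle hlt
            simp only [LinearMap.zero_apply] at hle hlt
            linarith
          have hconv := Zset_convex K a b ε₀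
          have hmem : b j k ∈ a k '' Zs ε₀ :=
            ((hconv.linear_image (a k)).ordConnected.out ⟨z₁, hz₁, rfl⟩ ⟨z₂, hz₂, rfl⟩)
              ⟨hle, hlt.le⟩
          obtain ⟨z₀, -, hz₀⟩ := hmem
          obtain ⟨x, hx⟩ : ∃ x : E, a k x ≠ 0 := by
            by_contra h
            push_neg at h
            exact hak (LinearMap.ext fun x => by simp [h x])
          have hnt : Nontrivial E := ⟨⟨x, 0, fun h => hx (by rw [h, map_zero])⟩⟩
          have hrank1 : 1 ≤ Module.finrank ℝ E := Module.finrank_pos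
          have hsurj : Function.Surjective (a k) := by
            intro r
            exact ⟨(r / a k x) • x, by rw [map_smul, smul_eq_mul, div_mul_cancel₀ _ hx]⟩
          have hker : Module.finrank ℝ (LinearMap.ker (a k)) + 1 = Module.finrank ℝ E := by
            have h1 := LinearMap.finrank_range_add_finrank_ker (a k)
            rw [LinearMap.range_eq_top.mpr hsurj, finrank_top, Module.finrank_self] at h1
            omega
          obtain ⟨d', rfl⟩ : ∃ d', d = d' + 1 := ⟨d - 1, by omega⟩
          have hkerle : Module.finrank ℝ (LinearMap.ker (a k)) ≤ d' := by omega
          have hsub : S.filter (cross j) ⊆ Finset.univ.filter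
              (SPred n q K (LinearMap.ker (a k))
                (fun k' => (a k').comp (LinearMap.ker (a k)).subtype)
                (fun j' k' => b j' k' - a k' z₀)) := by
            intro ε' hε'
            rw [Finset.mem_filter] at hε'
            obtain ⟨hε'S, w₁, hw₁, w₂, hw₂, hle', hlt'⟩ := hε'
            rw [hSdef, Finset.mem_filter] at hε'S
            obtain ⟨-, hzero, -⟩ := hε'S
            have hconv' := Zset_convex K a b ε'
            have hmem' : b j k ∈ a k '' Zs ε' :=
              ((hconv'.linear_image (a k)).ordConnected.out ⟨w₁, hw₁, rfl⟩ ⟨w₂, hw₂, rfl⟩)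
                ⟨hle', hlt'.le⟩
            obtain ⟨z, hzZ, hzeq⟩ := hmem'
            rw [Finset.mem_filter]
            refine ⟨Finset.mem_univ _, hzero,
              ⟨⟨z - z₀, by rw [LinearMap.mem_ker, map_sub, hzeq, hz₀, sub_self]⟩, ?_⟩⟩
            intro j' k' hk'
            have h1 := hzZ j' k' hk'
            rw [h1, decide_eq_decide]
            show b j' k' < a k' z ↔ b j' k' - a k' z₀ < a k' (z - z₀)
            rw [map_sub]
            exact (sub_lt_sub_iff_right _).symm
          calc (S.filter (cross j)).card
              ≤ _ := Finset.card_le_card hsub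
            _ ≤ ∑ i ∈ Finset.range (d' + 1), K.card.choose i * n ^ i :=
                ih d' ↥(LinearMap.ker (a k)) hkerle _ _
      calc S'.card
          = ∑ ε' ∈ S, (S'.filter fun ε => Φ ε = ε').card := hsum
        _ ≤ ∑ ε' ∈ S, (1 + (Finset.univ.filter fun j : Fin n => cross j ε').card) :=
            Finset.sum_le_sum hfiber
        _ = S.card + ∑ ε' ∈ S, (Finset.univ.filter fun j : Fin n => cross j ε').card := by
            rw [Finset.sum_add_distrib]
            simp
        _ = S.card + ∑ j : Fin n, (S.filter (cross j)).card := by rw [hswap]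
        _ ≤ (∑ i ∈ Finset.range (d + 1), K.card.choose i * n ^ i)
            + ∑ _j : Fin n, ∑ i ∈ Finset.range d, K.card.choose i * n ^ i :=
            add_le_add (ih d E hE a b) (Finset.sum_le_sum fun j _ => hcrossbound j)
        _ = (∑ i ∈ Finset.range (d + 1), K.card.choose i * n ^ i)
            + n * ∑ i ∈ Finset.range d, K.card.choose i * n ^ i := by
            rw [Finset.sum_const, Finset.card_univ, Fintype.card_fin, smul_eq_mul]
        _ = ∑ i ∈ Finset.range (d + 1), (K.card + 1).choose i * n ^ i := binom_step _ _ _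
        _ = ∑ i ∈ Finset.range (d + 1), (Finset.cons k K hk).card.choose i * n ^ i := by
            rw [Finset.card_cons]

theorem stmt7 (d n q : ℕ) (hd : 0 < d) (hn : 0 < n) (hq : 0 < q)
    (a : Fin q → Fin d → ℝ) (b : Fin n → Fin q → ℝ) :
    Set.ncard {ε : Fin n → Fin q → Bool |
        {z : Fin d → ℝ |
          (∀ j k, ε j k = false → ∑ t, a k t * z t ≤ b j k) ∧
          (∀ j k, ε j k = true → b j k < ∑ t, a k t * z t)}.Nonempty}
      ≤ ∑ i ∈ Finset.range (d + 1), q.choose i * n ^ i := by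
  classical
  set A : Fin q → (Fin d → ℝ) →ₗ[ℝ] ℝ := fun k =>
    { toFun := fun z => ∑ t, a k t * z t
      map_add' := by
        intro x y
        simp [mul_add, Finset.sum_add_distrib]
      map_smul' := by
        intro r x
        simp only [Pi.smul_apply, smul_eq_mul, RingHom.id_apply, Finset.mul_sum]
        exact Finset.sum_congr rfl fun t _ => by ring } with hA
  have hAval : ∀ k z, A k z = ∑ t, a k t * z t := fun _ _ => rfl
  have hset : {ε : Fin n → Fin q → Bool |
        {z : Fin d → ℝ |
          (∀ j k, ε j k = false → ∑ t, a k t * z t ≤ b j k) ∧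
          (∀ j k, ε j k = true → b j k < ∑ t, a k t * z t)}.Nonempty}
      = ↑(Finset.univ.filter (SPred n q Finset.univ (Fin d → ℝ) A b)) := by
    ext ε
    simp only [Set.mem_setOf_eq, Finset.coe_filter, Finset.mem_univ, true_and, SPred]
    constructor
    · rintro ⟨z, h1, h2⟩
      refine ⟨fun j k h => absurd trivial h, z, fun j k _ => ?_⟩
      cases hε : ε j k
      · have h' : ¬ (b j k < A k z) := by rw [hAval]; exact not_lt.mpr (h1 j k hε)
        exact (decide_eq_false h').symm
      · have h' : b j k < A k z := by rw [hAval]; exact h2 j k hε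
        exact (decide_eq_true h').symm
    · rintro ⟨-, z, hz⟩
      refine ⟨z, fun j k h => ?_, fun j k h => ?_⟩
      · have h' := hz j k trivial
        rw [h] at h'
        have h2 := of_decide_eq_false h'.symm
        rw [hAval] at h2
        exact not_lt.mp h2
      · have h' := hz j k trivial
        rw [h] at h'
        have h2 := of_decide_eq_true h'.symm
        rw [hAval] at h2
        exact h2
  rw [hset, Set.ncard_coe_finset]
  have hrank : Module.finrank ℝ (Fin d → ℝ) ≤ d := le_of_eq (Module.finrank_fin_fun ℝ)
  have := core n q Finset.univ d (Fin d → ℝ) hrank A b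
  simpa using this
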